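/- Let I = {m, …, m+k−1} ⊆ {1,…,n}, let g be an element of the standard parabolic subgroup A_I of the braid group B_{n+1}, and suppose z = a_{i_0}^{-1} g a_{j_0} is 1-pure (π_z(1)=1), where 0 ≤ i_0, j_0 ≤ n. If i_0 + 1 < m, then i_0 = j_0 and z = g. -/

import Mathlib

/-- Braid relations on generators σ_1,…,σ_n (0-indexed by `Fin n`). -/
def braidRels (n : ℕ) : Set (FreeGroup (Fin n)) :=
  { r | (∃ i j : Fin n, (i : ℕ) + 2 ≤ (j : ℕ) ∧
          r = FreeGroup.of i * FreeGroup.of j * (FreeGroup.of i)⁻¹ * (FreeGroup.of j)⁻¹) ∨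
        (∃ i j : Fin n, (i : ℕ) + 1 = (j : ℕ) ∧
          r = FreeGroup.of i * FreeGroup.of j * FreeGroup.of i *
              (FreeGroup.of j)⁻¹ * (FreeGroup.of i)⁻¹ * (FreeGroup.of j)⁻¹) }

/-- The braid group on `n+1` strands. -/
abbrev BraidGroup (n : ℕ) := PresentedGroup (braidRels n)

/-- The Artin generator σ_j (1-indexed, `1 ≤ j ≤ n`); junk value `1` outside that range. -/
noncomputable def σb {n : ℕ} (j : ℕ) : BraidGroup n :=
  if h : 1 ≤ j ∧ j ≤ n then PresentedGroup.of (⟨j - 1, by omega⟩ : Fin n) else 1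

/-- a_i = σ_i σ_{i-1} ⋯ σ_1, with a_0 = 1. -/
noncomputable def abr {n : ℕ} : ℕ → BraidGroup n
  | 0 => 1
  | i + 1 => σb (i + 1) * abr i

/-- transposition (i+1, i+2) (1-based) in S_{n+1} -/
def swapGen {n : ℕ} (i : Fin n) : Equiv.Perm (Fin (n + 1)) :=
  Equiv.swap i.castSucc i.succ

lemma swap_disjoint_commute {N : ℕ} {a b c d : Fin N} (h1 : a ≠ c) (h2 : a ≠ d) (h3 : b ≠ c)
    (h4 : b ≠ d) : Commute (Equiv.swap a b) (Equiv.swap c d) := by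
  apply Equiv.Perm.Disjoint.commute
  intro x
  by_cases hxa : x = a
  · subst hxa; right; exact Equiv.swap_apply_of_ne_of_ne h1 h2
  by_cases hxb : x = b
  · subst hxb; right; exact Equiv.swap_apply_of_ne_of_ne h3 h4
  · left; exact Equiv.swap_apply_of_ne_of_ne hxa hxb

lemma swap_braid {N : ℕ} (a b c : Fin N) (hab : a ≠ b) (hbc : b ≠ c) (hac : a ≠ c) :
    Equiv.swap a b * Equiv.swap b c * Equiv.swap a b =
      Equiv.swap b c * Equiv.swap a b * Equiv.swap b c := by
  have h1 : Equiv.swap a b * Equiv.swap b c * Equiv.swap a b = Equiv.swap a c := by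
    rw [Equiv.swap_comm a b, Equiv.swap_comm b c]
    exact Equiv.swap_mul_swap_mul_swap hbc.symm hac.symm
  have h2 : Equiv.swap b c * Equiv.swap a b * Equiv.swap b c = Equiv.swap c a := by
    exact Equiv.swap_mul_swap_mul_swap hab hac
  rw [h1, h2, Equiv.swap_comm]

lemma braid_rels_perm (n : ℕ) : ∀ r ∈ braidRels n, FreeGroup.lift (swapGen (n := n)) r = 1 := by
  rintro r (⟨i, j, hij, rfl⟩ | ⟨i, j, hij, rfl⟩) <;>
    simp only [map_mul, map_inv, FreeGroup.lift_apply_of]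
  · have hc : Commute (swapGen (n := n) i) (swapGen j) := by
      apply swap_disjoint_commute <;>
        exact Fin.ne_of_val_ne (by simp only [Fin.val_succ, Fin.coe_castSucc]; omega)
    rw [hc.eq]; group
  · have : j.castSucc = i.succ := by
      apply Fin.val_injective; simp only [Fin.val_succ, Fin.coe_castSucc]; omega
    have hb := swap_braid (N := n+1) i.castSucc i.succ j.succ
      (Fin.ne_of_val_ne (by simp only [Fin.val_succ, Fin.coe_castSucc]; omega)) (Fin.ne_of_val_ne (by simp only [Fin.val_succ, Fin.coe_castSucc]; omega))
      (Fin.ne_of_val_ne (by simp only [Fin.val_succ, Fin.coe_castSucc]; omega))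
    unfold swapGen
    rw [this, hb]; group

/-- The canonical projection from the braid group onto the symmetric group S_{n+1}. -/
noncomputable def πb {n : ℕ} : BraidGroup n →* Equiv.Perm (Fin (n + 1)) :=
  PresentedGroup.toGroup (braid_rels_perm n)

/-- The standard parabolic subgroup generated by σ_m, …, σ_{m+k-1}. -/
noncomputable def AIb (n m k : ℕ) : Subgroup (BraidGroup n) :=
  Subgroup.closure { x | ∃ j, m ≤ j ∧ j ≤ m + k - 1 ∧ x = σb j }


lemma mk_rel {n : ℕ} {r : FreeGroup (Fin n)} (hr : r ∈ braidRels n) :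
    PresentedGroup.mk (braidRels n) r = 1 := by
  have : r ∈ Subgroup.normalClosure (braidRels n) := Subgroup.subset_normalClosure hr
  exact (QuotientGroup.eq_one_iff r).mpr this

lemma sigma_comm {n l j : ℕ} (hl : 1 ≤ l) (hlj : l + 2 ≤ j) (hj : j ≤ n) :
    Commute (σb l : BraidGroup n) (σb j) := by
  have hln : l ≤ n := by omega
  have hj1 : 1 ≤ j := by omega
  have hrel : (FreeGroup.of (⟨l - 1, by omega⟩ : Fin n) * FreeGroup.of (⟨j - 1, by omega⟩ : Fin n) *
      (FreeGroup.of (⟨l - 1, by omega⟩ : Fin n))⁻¹ * (FreeGroup.of (⟨j - 1, by omega⟩ : Fin n))⁻¹)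
      ∈ braidRels n := by
    left
    exact ⟨⟨l - 1, by omega⟩, ⟨j - 1, by omega⟩, by simp; omega, rfl⟩
  have h1 := mk_rel hrel
  simp only [map_mul, map_inv] at h1
  have hσl : (σb l : BraidGroup n) = PresentedGroup.mk (braidRels n)
      (FreeGroup.of (⟨l - 1, by omega⟩ : Fin n)) := by
    rw [σb, dif_pos ⟨hl, hln⟩]; rfl
  have hσj : (σb j : BraidGroup n) = PresentedGroup.mk (braidRels n)
      (FreeGroup.of (⟨j - 1, by omega⟩ : Fin n)) := by
    rw [σb, dif_pos ⟨hj1, hj⟩]; rfl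
  rw [Commute, SemiconjBy, hσl, hσj, ← mul_inv_eq_one, mul_inv_rev, ← mul_assoc]
  exact h1

lemma πb_σb {n j : ℕ} (hj1 : 1 ≤ j) (hjn : j ≤ n) :
    πb (σb j : BraidGroup n) = swapGen (⟨j - 1, by omega⟩ : Fin n) := by
  rw [σb, dif_pos ⟨hj1, hjn⟩, πb, PresentedGroup.toGroup.of]

lemma πb_abr_zero {n : ℕ} (i : ℕ) (hi : i ≤ n) :
    πb (abr i : BraidGroup n) (⟨0, by omega⟩ : Fin (n + 1)) = ⟨i, by omega⟩ := by
  induction i with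
  | zero => simp [abr]
  | succ l ih =>
    rw [abr, map_mul, Equiv.Perm.mul_apply, ih (by omega), πb_σb (by omega) hi]
    rw [swapGen]
    have h1 : ((⟨l + 1 - 1, by omega⟩ : Fin n).castSucc : Fin (n+1)) = ⟨l, by omega⟩ := rfl
    have h2 : ((⟨l + 1 - 1, by omega⟩ : Fin n).succ : Fin (n+1)) = ⟨l + 1, by omega⟩ := rfl
    rw [h1, h2, Equiv.swap_apply_left]

lemma AIb_fix {n m k : ℕ} (hm : 1 ≤ m) (hmk : m + k - 1 ≤ n) {g : BraidGroup n}
    (hg : g ∈ AIb n m k) (x : Fin (n + 1)) (hx : (x : ℕ) < m - 1) : πb g x = x := by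
  induction hg using Subgroup.closure_induction with
  | mem y hy =>
    obtain ⟨j, hj1, hj2, rfl⟩ := hy
    rw [πb_σb (by omega) (by omega), swapGen]
    apply Equiv.swap_apply_of_ne_of_ne
    · exact Fin.ne_of_val_ne (by simp only [Fin.coe_castSucc]; omega)
    · exact Fin.ne_of_val_ne (by simp only [Fin.val_succ]; omega)
  | one => simp
  | mul a b _ _ ha hb => rw [map_mul, Equiv.Perm.mul_apply, hb, ha]
  | inv a _ ha =>
    rw [map_inv]
    exact Equiv.Perm.inv_eq_iff_eq.mpr ha.symm

lemma abr_comm_sigma {n : ℕ} (l j : ℕ) (hlj : l + 2 ≤ j) (hj : j ≤ n) :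
    Commute (abr l : BraidGroup n) (σb j) := by
  induction l with
  | zero => exact Commute.one_left _
  | succ l ih =>
    rw [abr]
    exact Commute.mul_left (sigma_comm (by omega) (by omega) hj) (ih (by omega))

lemma abr_commute_AIb {n m k i0 : ℕ} (hi0 : i0 ≤ n) (hmk : m + k - 1 ≤ n)
    (hlt : i0 + 1 < m) {g : BraidGroup n} (hg : g ∈ AIb n m k) :
    Commute (abr i0 : BraidGroup n) g := by
  induction hg using Subgroup.closure_induction with
  | mem y hy =>
    obtain ⟨j, hj1, hj2, rfl⟩ := hy
    exact abr_comm_sigma i0 j (by omega) (by omega)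
  | one => exact Commute.one_right _
  | mul a b _ _ ha hb => exact ha.mul_right hb
  | inv a _ ha => exact ha.inv_right

theorem lemma_technical_1 (n m k i0 j0 : ℕ) (hm : 1 ≤ m) (hk : 1 ≤ k) (hmk : m + k - 1 ≤ n)
    (hi0 : i0 ≤ n) (hj0 : j0 ≤ n) (g : BraidGroup n) (hg : g ∈ AIb n m k)
    (z : BraidGroup n) (hz : z = (abr i0)⁻¹ * g * abr j0)
    (hpure : πb z (⟨0, by omega⟩ : Fin (n + 1)) = ⟨0, by omega⟩)
    (hlt : i0 + 1 < m) :
    i0 = j0 ∧ z = g := by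
  have hπ : πb g (⟨j0, by omega⟩ : Fin (n + 1)) = (⟨i0, by omega⟩ : Fin (n + 1)) := by
    have h := hpure
    rw [hz, map_mul, map_mul, map_inv, Equiv.Perm.mul_apply, Equiv.Perm.mul_apply,
      πb_abr_zero j0 hj0] at h
    have h2 := Equiv.Perm.eq_inv_iff_eq.mp h.symm
    rw [πb_abr_zero i0 hi0] at h2
    exact h2.symm
  have hij : i0 = j0 := by
    have hfix : πb g (⟨i0, by omega⟩ : Fin (n + 1)) = ⟨i0, by omega⟩ :=
      AIb_fix hm hmk hg _ (show i0 < m - 1 by omega)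
    have h3 := Equiv.injective (πb g) (hπ.trans hfix.symm)
    have h4 := congrArg Fin.val h3
    simp only [Fin.val_mk] at h4
    omega
  refine ⟨hij, ?_⟩
  have hc := abr_commute_AIb hi0 hmk hlt hg
  rw [hz, ← hij, mul_assoc, ← hc.eq, ← mul_assoc, inv_mul_cancel, one_mul]
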